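/- Let f_i, f_j : ℝ^n → ℝ be convex differentiable functions with Lipschitz gradients of constants L_i, L_j > 0 respectively, and let f(x) = sum over all blocks of f_t(x_t). For x ∈ ℝ^{nN} define d_i(x) = -(∇f_i(x_i) - ∇f_j(x_j))/(L_i + L_j) and d_j(x) = -d_i(x). Then f(x) - f(x + U_i d_i(x) + U_j d_j(x)) ≥ ‖∇f_i(x_i) - ∇f_j(x_j)‖^2 / (2(L_i + L_j)), where U_i d places vector d in block i and zeros elsewhere. -/

import Mathlib

open Set

variable {E : Type*} [NormedAddCommGroup E] [InnerProductSpace ℝ E] [CompleteSpace E]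

/-- derivative along a line -/
lemma line_hasDerivAt (φ : E → ℝ) (G : E → E) (hgrad : ∀ y, HasGradientAt φ (G y) y)
    (x d : E) (t : ℝ) :
    HasDerivAt (fun s : ℝ => φ (x + s • d)) (inner ℝ (G (x + t • d)) d : ℝ) t := by
  have h1 : HasDerivAt (fun s : ℝ => x + s • d) d t := by
    simpa using ((hasDerivAt_id t).smul_const d).const_add x
  have h2 := (hgrad (x + t • d)).hasFDerivAt.comp_hasDerivAt t h1
  simp [InnerProductSpace.toDual_apply_apply] at h2
  exact h2

/-- gradient inequality for a convex function -/
lemma convex_grad_ineq (φ : E → ℝ) (G : E → E) (hconv : ConvexOn ℝ Set.univ φ)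
    (hgrad : ∀ y, HasGradientAt φ (G y) y) (x y : E) :
    φ x + inner ℝ (G x) (y - x) ≤ φ y := by
  have hline : ConvexOn ℝ Set.univ (fun s : ℝ => φ (x + s • (y - x))) := by
    have h0 := (hconv.comp_affineMap (AffineMap.lineMap x y)).subset
      (by simp : (univ : Set ℝ) ⊆ _) convex_univ
    rw [show (fun s : ℝ => φ (x + s • (y - x))) = φ ∘ AffineMap.lineMap x y from ?_]
    · exact h0
    funext s
    simp only [Function.comp_apply, AffineMap.lineMap_apply_module]
    congr 1
    module
  have hd := line_hasDerivAt φ G hgrad x (y - x) 0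
  simp only [zero_smul, add_zero] at hd
  have := hline.le_slope_of_hasDerivAt (mem_univ (0:ℝ)) (mem_univ (1:ℝ)) one_pos hd
  rw [slope_def_field] at this
  simp at this
  linarith [this]

/-- descent lemma -/
lemma descent_lemma (φ : E → ℝ) (G : E → E) (Lc : ℝ) (hLc : 0 < Lc)
    (hgrad : ∀ y, HasGradientAt φ (G y) y)
    (hlip : ∀ a b, ‖G a - G b‖ ≤ Lc * ‖a - b‖) (x d : E) :
    φ (x + d) ≤ φ x + inner ℝ (G x) d + Lc / 2 * ‖d‖ ^ 2 := by
  set h : ℝ → ℝ := fun t => φ (x + t • d) - t * (inner ℝ (G x) d : ℝ) - Lc / 2 * t ^ 2 * ‖d‖ ^ 2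
    with hh
  have hderiv : ∀ t : ℝ, HasDerivAt h
      ((inner ℝ (G (x + t • d)) d : ℝ) - (inner ℝ (G x) d : ℝ) - Lc * t * ‖d‖ ^ 2) t := by
    intro t
    have h1 := line_hasDerivAt φ G hgrad x d t
    have h2 : HasDerivAt (fun t : ℝ => t * (inner ℝ (G x) d : ℝ)) (inner ℝ (G x) d : ℝ) t := by
      simpa using (hasDerivAt_id t).mul_const (inner ℝ (G x) d : ℝ)
    have h3 : HasDerivAt (fun t : ℝ => Lc / 2 * t ^ 2 * ‖d‖ ^ 2)
        (Lc * t * ‖d‖ ^ 2) t := by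
      have := ((hasDerivAt_pow 2 t).const_mul (Lc / 2)).mul_const (‖d‖ ^ 2)
      refine this.congr_deriv ?_
      ring
    exact (h1.sub h2).sub h3
  have hdiff : Differentiable ℝ h := fun t => (hderiv t).differentiableAt
  have hmono : AntitoneOn h (Icc (0:ℝ) 1) := by
    apply antitoneOn_of_deriv_nonpos (convex_Icc 0 1) hdiff.continuous.continuousOn
      hdiff.differentiableOn
    intro t ht
    rw [interior_Icc] at ht
    rw [(hderiv t).deriv]
    have e1 : (inner ℝ (G (x + t • d)) d : ℝ) - (inner ℝ (G x) d : ℝ)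
        = inner ℝ (G (x + t • d) - G x) d := by rw [inner_sub_left]
    have e2 : (inner ℝ (G (x + t • d) - G x) d : ℝ) ≤ ‖G (x + t • d) - G x‖ * ‖d‖ :=
      real_inner_le_norm _ _
    have e3 : ‖G (x + t • d) - G x‖ ≤ Lc * (t * ‖d‖) := by
      have := hlip (x + t • d) x
      simpa [norm_smul, abs_of_pos ht.1] using this
    have hd0 : (0:ℝ) ≤ ‖d‖ := norm_nonneg d
    nlinarith [e2, mul_le_mul_of_nonneg_right e3 hd0]
  have h10 : h 1 ≤ h 0 := hmono (by norm_num : (0:ℝ) ∈ Icc (0:ℝ) 1)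
    (by norm_num : (1:ℝ) ∈ Icc (0:ℝ) 1) zero_le_one
  simp only [hh, zero_smul, add_zero, one_smul, zero_pow, one_pow, zero_mul, mul_zero,
    mul_one, sub_zero, one_mul] at h10
  linarith



/-- The descent inequality (10): for the optimal paired step
`d_i = -(∇f_i(x_i) - ∇f_j(x_j))/(L_i + L_j)`, `d_j = -d_i`,
`f(x) - f(x + U_i d_i + U_j d_j) ≥ ‖∇f_i(x_i) - ∇f_j(x_j)‖² / (2(L_i + L_j))`. -/
theorem two_block_descent (N n : ℕ) (hN : 2 ≤ N) (hn : 1 ≤ n)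
    (L : Fin N → ℝ) (hL : ∀ t, 0 < L t)
    (f : Fin N → EuclideanSpace ℝ (Fin n) → ℝ)
    (g : Fin N → EuclideanSpace ℝ (Fin n) → EuclideanSpace ℝ (Fin n))
    (hconv : ∀ t, ConvexOn ℝ Set.univ (f t))
    (hgrad : ∀ t x, HasGradientAt (f t) (g t x) x)
    (hlip : ∀ t x y, ‖g t x - g t y‖ ≤ L t * ‖x - y‖)
    (i j : Fin N) (hij : i ≠ j)
    (x : Fin N → EuclideanSpace ℝ (Fin n))
    (di : EuclideanSpace ℝ (Fin n))
    (hdi : di = -(L i + L j)⁻¹ • (g i (x i) - g j (x j)))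
    (x' : Fin N → EuclideanSpace ℝ (Fin n))
    (hx' : x' = Function.update (Function.update x i (x i + di)) j (x j - di)) :
    (∑ t, f t (x t)) - (∑ t, f t (x' t)) ≥
      ‖g i (x i) - g j (x j)‖ ^ 2 / (2 * (L i + L j)) := by
  set v := g i (x i) - g j (x j) with hv
  set c := L i + L j with hc
  have hcpos : 0 < c := add_pos (hL i) (hL j)
  have hxi' : x' i = x i + di := by
    simp [hx', Function.update_apply, hij, hij.symm]
  have hxj' : x' j = x j - di := by simp [hx']
  have key : (∑ t, f t (x t)) - (∑ t, f t (x' t))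
      = (f i (x i) - f i (x' i)) + (f j (x j) - f j (x' j)) := by
    rw [← Finset.sum_sub_distrib]
    rw [← Finset.sum_subset (Finset.subset_univ ({i, j} : Finset (Fin N)))
      (fun t _ ht => by
        simp only [Finset.mem_insert, Finset.mem_singleton, not_or] at ht
        have : x' t = x t := by
          simp [hx', Function.update_apply, ht.1, ht.2]
        rw [this, sub_self])]
    rw [Finset.sum_pair hij]
  -- descent inequalities
  have hdi_i := descent_lemma (f i) (g i) (L i) (hL i) (hgrad i) (hlip i) (x i) di
  have hdi_j := descent_lemma (f j) (g j) (L j) (hL j) (hgrad j) (hlip j) (x j) (-di)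
  rw [← sub_eq_add_neg] at hdi_j
  have hnormdi : ‖di‖ = c⁻¹ * ‖v‖ := by
    rw [hdi, norm_smul]
    simp only [norm_neg, Real.norm_eq_abs, neg_smul]
    rw [abs_of_pos (inv_pos.mpr hcpos)]
  have hinner : (inner ℝ (g i (x i)) di : ℝ) - (inner ℝ (g j (x j)) di : ℝ)
      = -(c⁻¹ * ‖v‖ ^ 2) := by
    rw [← inner_sub_left, ← hv, hdi, real_inner_smul_right, real_inner_self_eq_norm_sq]
    ring
  have hinnj : (inner ℝ (g j (x j)) (-di) : ℝ) = -(inner ℝ (g j (x j)) di : ℝ) :=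
    inner_neg_right _ _
  have hnormneg : ‖-di‖ = ‖di‖ := norm_neg di
  rw [key, hxi', hxj', ge_iff_le]
  rw [hinnj, hnormneg] at hdi_j
  have h2 : f i (x i) - f i (x i + di) + (f j (x j) - f j (x j - di))
      ≥ -((inner ℝ (g i (x i)) di : ℝ) - (inner ℝ (g j (x j)) di : ℝ))
        - (L i + L j) / 2 * ‖di‖ ^ 2 := by linarith
  rw [hinner, ← hc, hnormdi] at h2
  have hne : c ≠ 0 := ne_of_gt hcpos
  have : -(-(c⁻¹ * ‖v‖ ^ 2)) - c / 2 * (c⁻¹ * ‖v‖) ^ 2 = ‖v‖ ^ 2 / (2 * c) := by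
    field_simp
    ring
  rw [this] at h2
  linarith
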